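/- If Player II has a winning strategy in the bounding game with respect to a family A ⊆ ω^ω, then |A| ≥ 𝔡, where 𝔡 is the dominating number. Hence the minimal cardinality of a family A for which Player II has a winning strategy in the bounding game equals 𝔡. -/

import Mathlib

open Cardinal

/-- Player II wins a play of the bounding game with respect to `A`. -/
def IIWinsBounding (A : Set (ℕ → ℕ)) (n : ℕ → ℕ) (i : ℕ → Bool) : Prop :=
  {k | i k = true}.Infinite ∧ ∃ g ∈ A, ∀ k, (i k = true ↔ n k < g k)

/-- Player II has a winning strategy in the bounding game with respect to `A`. -/
def IIWinStratBounding (A : Set (ℕ → ℕ)) : Prop :=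
  ∃ τ : List ℕ → Bool, ∀ n : ℕ → ℕ,
    IIWinsBounding A n (fun k => τ ((List.range (k + 1)).map n))

/-- The dominating number 𝔡. -/
noncomputable def frakD : Cardinal :=
  sInf { c | ∃ D : Set (ℕ → ℕ),
    (∀ x : ℕ → ℕ, ∃ y ∈ D, ∀ᶠ n in Filter.atTop, x n ≤ y n) ∧ #D = c }

open Filter


lemma frakD_set_nonempty : { c | ∃ D : Set (ℕ → ℕ),
    (∀ x : ℕ → ℕ, ∃ y ∈ D, ∀ᶠ n in Filter.atTop, x n ≤ y n) ∧ #D = c }.Nonempty :=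
  ⟨_, Set.univ, fun x => ⟨x, Set.mem_univ x, Filter.Eventually.of_forall fun _ => le_rfl⟩, rfl⟩

lemma frakD_mem : ∃ D : Set (ℕ → ℕ),
    (∀ x : ℕ → ℕ, ∃ y ∈ D, ∀ᶠ n in Filter.atTop, x n ≤ y n) ∧ #D = frakD :=
  csInf_mem frakD_set_nonempty

lemma frakD_le {D : Set (ℕ → ℕ)}
    (hD : ∀ x : ℕ → ℕ, ∃ y ∈ D, ∀ᶠ n in Filter.atTop, x n ≤ y n) : frakD ≤ #D :=
  csInf_le (OrderBot.bddBelow _) ⟨D, hD, rfl⟩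

lemma aleph0_lt_of_dominating {D : Set (ℕ → ℕ)}
    (hD : ∀ x : ℕ → ℕ, ∃ y ∈ D, ∀ᶠ n in Filter.atTop, x n ≤ y n) : ℵ₀ < #D := by
  rw [← not_le]
  intro hle
  have hc : D.Countable := Cardinal.mk_le_aleph0_iff.mp hle
  have hne : D.Nonempty := by
    obtain ⟨y, hy, -⟩ := hD (fun _ => 0); exact ⟨y, hy⟩
  obtain ⟨f, hf⟩ := hc.exists_eq_range hne
  set x : ℕ → ℕ := fun k => (Finset.range (k + 1)).sup (fun i => f i k) + 1 with hx
  obtain ⟨y, hyD, hev⟩ := hD x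
  rw [hf] at hyD
  obtain ⟨i, rfl⟩ := hyD
  obtain ⟨N, hN⟩ := eventually_atTop.mp hev
  have h1 := hN (max N i) (le_max_left _ _)
  have h2 : f i (max N i) ≤ (Finset.range (max N i + 1)).sup (fun j => f j (max N i)) :=
    Finset.le_sup (f := fun j => f j (max N i)) (by simp only [Finset.mem_range]; omega)
  simp only [hx] at h1
  omega

lemma aleph0_lt_frakD : ℵ₀ < frakD := by
  obtain ⟨D, hD, hc⟩ := frakD_mem
  rw [← hc]
  exact aleph0_lt_of_dominating hD

lemma exists_escape (G : Set (ℕ → ℕ)) (h : #G < frakD) :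
    ∃ x : ℕ → ℕ, ∀ y ∈ G, ∃ᶠ m in atTop, y m < x m := by
  by_contra hc
  push_neg at hc
  have : frakD ≤ #G := by
    refine frakD_le (fun x => ?_)
    obtain ⟨y, hyG, hy⟩ := hc x
    refine ⟨y, hyG, ?_⟩
    exact hy
  exact absurd this (not_le.mpr h)

lemma selfEscape {ι : Type} (f : ι → ℕ → ℕ) (hc : #ι < frakD)
    (hmono : ∀ i, Monotone (f i)) (hid : ∀ i p, p < f i p) :
    ∃ z : ℕ → ℕ, StrictMono z ∧ (∀ k, k < z k) ∧
      ∀ i, ∃ᶠ s in atTop, 0 < s ∧ f i (z (s - 1)) < z s := by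
  set G : Set (ℕ → ℕ) := Set.range (fun x : ι × ℕ => fun m => (f x.1)^[m + x.2 + 1] 0) with hG
  have hGcard : #G < frakD := by
    refine lt_of_le_of_lt Cardinal.mk_range_le ?_
    have h2 : #(ι × ℕ) = #ι * ℵ₀ := by simp
    rw [h2]
    exact Cardinal.mul_lt_of_lt aleph0_lt_frakD.le hc aleph0_lt_frakD
  obtain ⟨x, hx⟩ := exists_escape G hGcard
  set z : ℕ → ℕ := fun s => (Finset.range (s + 1)).sup x + s + 1 with hz
  have hzmono : StrictMono z := by
    apply strictMono_nat_of_lt_succ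
    intro n
    have : (Finset.range (n + 1)).sup x ≤ (Finset.range (n + 1 + 1)).sup x :=
      Finset.sup_mono (Finset.range_subset_range.mpr (by omega))
    simp only [hz]; omega
  have hzid : ∀ k, k < z k := fun k => by simp only [hz]; omega
  have hxz : ∀ m, x m ≤ z m := fun m => by
    have : x m ≤ (Finset.range (m + 1)).sup x := Finset.le_sup (by simp)
    simp only [hz]; omega
  refine ⟨z, hzmono, hzid, fun i => ?_⟩
  by_contra hcon
  rw [not_frequently] at hcon
  obtain ⟨N, hN⟩ := eventually_atTop.mp hcon
  have hstep : ∀ s, N + 1 ≤ s → z s ≤ f i (z (s - 1)) := by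
    intro s hs
    have h3 := hN s (by omega)
    rw [not_and_or] at h3
    rcases h3 with h' | h'
    · omega
    · exact not_lt.mp h'
  have hFiterlow : ∀ n, n ≤ (f i)^[n] 0 := by
    intro n
    induction n with
    | zero => simp
    | succ n ih =>
      rw [Function.iterate_succ_apply']
      have := hid i ((f i)^[n] 0)
      omega
  have hkey : ∀ k, z (N + k) ≤ (f i)^[k + z N] 0 := by
    intro k
    induction k with
    | zero => simpa using hFiterlow (z N)
    | succ k ih =>
      have h4 : z (N + k + 1) ≤ f i (z (N + k)) := by
        have := hstep (N + k + 1) (by omega)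
        simpa using this
      have h5 : f i (z (N + k)) ≤ f i ((f i)^[k + z N] 0) := hmono i ih
      have h6 : f i ((f i)^[k + z N] 0) = (f i)^[k + 1 + z N] 0 := by
        have harith : k + 1 + z N = (k + z N) + 1 := by omega
        rw [harith, Function.iterate_succ_apply']
      have h7 : z (N + (k + 1)) = z (N + k + 1) := by ring_nf
      omega
  have hdN : N + 1 ≤ z N := hzid N
  set d := z N - N - 1 with hd
  have hyG : (fun m => (f i)^[m + d + 1] 0) ∈ G := ⟨(i, d), rfl⟩
  have hfreq := hx _ hyG
  obtain ⟨m, hym, hmN⟩ := (hfreq.and_eventually (eventually_ge_atTop N)).exists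
  have h8 : z m ≤ (f i)^[m - N + z N] 0 := by
    have := hkey (m - N)
    have harith : N + (m - N) = m := by omega
    rwa [harith] at this
  have h9 : m - N + z N = m + d + 1 := by omega
  rw [h9] at h8
  have := hxz m
  omega

section Game

attribute [local instance] Classical.propDecidable

variable (τ : List ℕ → Bool)

/-- One step of Player I's counter-play: if some value gets answer `false`, play the
least such (a "stall"); otherwise the position is "forced" and we play `w c` where `c`
counts previous forced positions. -/
noncomputable def step (w : ℕ → ℕ) (p : List ℕ × ℕ) : List ℕ × ℕ :=
  if h : ∃ v, τ (p.1 ++ [v]) = false then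
    (p.1 ++ [Nat.find h], p.2)
  else
    (p.1 ++ [w p.2], p.2 + 1)

noncomputable def st (w : ℕ → ℕ) : ℕ → List ℕ × ℕ
  | 0 => ([], 0)
  | k + 1 => step τ w (st w k)

def Forced (w : ℕ → ℕ) (k : ℕ) : Prop :=
  ∀ v, τ ((st τ w k).1 ++ [v]) = true

noncomputable def mv (w : ℕ → ℕ) (k : ℕ) : ℕ :=
  if h : ∃ v, τ ((st τ w k).1 ++ [v]) = false then Nat.find h else w (st τ w k).2

lemma not_ex_iff_forced {w : ℕ → ℕ} {k : ℕ} :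
    (¬ ∃ v, τ ((st τ w k).1 ++ [v]) = false) ↔ Forced τ w k := by
  simp [Forced]

lemma st_fst_succ (w : ℕ → ℕ) (k : ℕ) :
    (st τ w (k + 1)).1 = (st τ w k).1 ++ [mv τ w k] := by
  by_cases h : ∃ v, τ ((st τ w k).1 ++ [v]) = false
  · rw [st, step, mv, dif_pos h, dif_pos h]
  · rw [st, step, mv, dif_neg h, dif_neg h]

lemma st_snd_succ (w : ℕ → ℕ) (k : ℕ) :
    (st τ w (k + 1)).2 = if Forced τ w k then (st τ w k).2 + 1 else (st τ w k).2 := by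
  by_cases h : ∃ v, τ ((st τ w k).1 ++ [v]) = false
  · have hnf : ¬ Forced τ w k := by rw [← not_ex_iff_forced]; exact not_not_intro h
    rw [st, step, dif_pos h, if_neg hnf]
  · rw [st, step, dif_neg h, if_pos ((not_ex_iff_forced τ).mp h)]

lemma mv_of_forced {w : ℕ → ℕ} {k : ℕ} (h : Forced τ w k) :
    mv τ w k = w (st τ w k).2 :=
  dif_neg ((not_ex_iff_forced τ).mpr h)

lemma bit_of_forced {w : ℕ → ℕ} {k : ℕ} (h : Forced τ w k) :
    τ ((st τ w k).1 ++ [mv τ w k]) = true := h _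

lemma bit_of_not_forced {w : ℕ → ℕ} {k : ℕ} (h : ¬ Forced τ w k) :
    τ ((st τ w k).1 ++ [mv τ w k]) = false := by
  have h' : ∃ v, τ ((st τ w k).1 ++ [v]) = false := by
    by_contra h''
    exact h ((not_ex_iff_forced τ).mp h'')
  rw [mv, dif_pos h']
  exact Nat.find_spec h'

lemma st_fst_eq (w : ℕ → ℕ) (k : ℕ) :
    (st τ w k).1 = (List.range k).map (mv τ w) := by
  induction k with
  | zero => rfl
  | succ k ih => rw [List.range_succ, List.map_append, st_fst_succ, ih]; rfl

lemma st_snd_le_succ (w : ℕ → ℕ) (k : ℕ) : (st τ w k).2 ≤ (st τ w (k + 1)).2 := by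
  rw [st_snd_succ]; split <;> omega

lemma st_congr {w w' : ℕ → ℕ} {s : ℕ} (hw : ∀ i < s, w i = w' i) :
    ∀ k, (st τ w k).2 ≤ s → st τ w k = st τ w' k := by
  intro k
  induction k with
  | zero => intro _; rfl
  | succ k ih =>
    intro hk
    have hle : (st τ w k).2 ≤ s := le_trans (st_snd_le_succ τ w k) hk
    have heq := ih hle
    rw [st, st, heq]
    by_cases h : ∃ v, τ ((st τ w' k).1 ++ [v]) = false
    · rw [step, step, dif_pos h, dif_pos h]
    · rw [step, step, dif_neg h, dif_neg h]
      have hforced : Forced τ w k := by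
        rw [← not_ex_iff_forced]
        rw [heq]; exact h
      have hlt : (st τ w' k).2 < s := by
        have := st_snd_succ τ w k
        rw [if_pos hforced] at this
        rw [← heq]; omega
      rw [hw _ hlt]

lemma forced_congr {w w' : ℕ → ℕ} {k : ℕ} (h : st τ w k = st τ w' k) :
    Forced τ w k ↔ Forced τ w' k := by unfold Forced; rw [h]

lemma st_snd_eq_count (w : ℕ → ℕ) (k : ℕ) :
    (st τ w k).2 = Nat.count (Forced τ w) k := by
  induction k with
  | zero => rfl
  | succ k ih => rw [st_snd_succ, Nat.count_succ, ih]; split <;> omega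


noncomputable def extf (s p : ℕ) (t : Fin s → Fin (p + 1)) : ℕ → ℕ :=
  fun i => if h : i < s then (t ⟨i, h⟩ : ℕ) else 0

noncomputable def psi (g : ℕ → ℕ) (p : ℕ) : ℕ :=
  (Finset.range (p + 1)).sup fun s =>
    Finset.univ.sup fun t : Fin s → Fin (p + 1) =>
      g (Nat.nth (Forced τ (extf s p t)) s)

lemma psi_mono (g : ℕ → ℕ) : Monotone (psi τ g) := by
  intro p p' hpp'
  apply Finset.sup_le
  intro s hs
  apply Finset.sup_le
  intro t _
  have hsp' : s ∈ Finset.range (p' + 1) := by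
    simp only [Finset.mem_range] at hs ⊢; omega
  have hb : ∀ j : Fin s, (t j).1 < p' + 1 := fun j => by have := (t j).2; omega
  set t' : Fin s → Fin (p' + 1) := fun j => ⟨(t j).1, hb j⟩ with ht'
  have he : extf s p t = extf s p' t' := by
    funext i
    unfold extf
    split <;> rfl
  calc g (Nat.nth (Forced τ (extf s p t)) s)
      = g (Nat.nth (Forced τ (extf s p' t')) s) := by rw [he]
    _ ≤ Finset.univ.sup (fun t'' : Fin s → Fin (p' + 1) =>
          g (Nat.nth (Forced τ (extf s p' t'')) s)) :=
        Finset.le_sup (f := fun t'' : Fin s → Fin (p' + 1) =>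
          g (Nat.nth (Forced τ (extf s p' t'')) s)) (Finset.mem_univ t')
    _ ≤ psi τ g p' := Finset.le_sup (f := fun s => Finset.univ.sup
          (fun t'' : Fin s → Fin (p' + 1) => g (Nat.nth (Forced τ (extf s p' t'')) s))) hsp'

end Game

attribute [local instance] Classical.propDecidable in
theorem part1 (A : Set (ℕ → ℕ)) (h : IIWinStratBounding A) : frakD ≤ #A := by
  by_contra hlt
  rw [not_le] at hlt
  obtain ⟨τ, hτ⟩ := h
  set f : ↥A → ℕ → ℕ := fun g p => psi τ (g : ℕ → ℕ) p + p + 1 with hf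
  have hmono : ∀ i, Monotone (f i) := fun i a b hab => by
    have := psi_mono τ (i : ℕ → ℕ) hab
    simp only [hf]
    omega
  have hid : ∀ i p, p < f i p := fun i p => by simp only [hf]; omega
  obtain ⟨z, hz1, hz2, hz3⟩ := selfEscape f hlt hmono hid
  obtain ⟨hinf, g, hgA, hmatch⟩ := hτ (mv τ z)
  have hbit : ∀ k, (τ ((List.range (k + 1)).map (mv τ z)) = true) ↔ Forced τ z k := by
    intro k
    have hpre : (List.range (k + 1)).map (mv τ z) = (st τ z k).1 ++ [mv τ z k] := by
      rw [List.range_succ, List.map_append, ← st_fst_eq]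
      rfl
    rw [hpre]
    constructor
    · intro ht
      by_contra hnf
      rw [bit_of_not_forced τ hnf] at ht
      cases ht
    · exact fun hfo => bit_of_forced τ hfo
  have hFinf : (setOf (Forced τ z)).Infinite := by
    have hset : {k | (fun k => τ ((List.range (k + 1)).map (mv τ z))) k = true}
        = setOf (Forced τ z) := Set.ext fun k => hbit k
    rwa [hset] at hinf
  obtain ⟨s, hs0, hslt⟩ := (hz3 ⟨g, hgA⟩).exists
  set p := z (s - 1) with hp
  have hsp : s ≤ p := by have := hz2 (s - 1); omega
  have hbound : ∀ j : Fin s, z j.1 < p + 1 := fun j => by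
    have h1 : z j.1 ≤ z (s - 1) := hz1.monotone (by omega)
    omega
  set t : Fin s → Fin (p + 1) := fun j => ⟨z j.1, hbound j⟩ with ht
  set w' := extf s p t with hw'
  have hwz : ∀ i < s, z i = w' i := fun i hi => by
    simp [hw', extf, ht, dif_pos hi]
  set K := Nat.nth (Forced τ z) s with hK
  have hKforced : Forced τ z K := Nat.nth_mem_of_infinite hFinf s
  have hKcount : Nat.count (Forced τ z) K = s := Nat.count_nth_of_infinite hFinf s
  have hstK : ∀ j, j ≤ K → st τ z j = st τ w' j := by
    intro j hj
    apply st_congr τ hwz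
    rw [st_snd_eq_count]
    calc Nat.count (Forced τ z) j ≤ Nat.count (Forced τ z) K := Nat.count_monotone _ hj
      _ = s := hKcount
  have hKforced' : Forced τ w' K := (forced_congr τ (hstK K le_rfl)).mp hKforced
  have hcount' : Nat.count (Forced τ w') K = s := by
    rw [← hKcount, Nat.count_eq_card_filter_range, Nat.count_eq_card_filter_range]
    congr 1
    apply Finset.filter_congr
    intro j hj
    simp only [Finset.mem_range] at hj
    exact (forced_congr τ (hstK j hj.le)).symm
  have hnth' : Nat.nth (Forced τ w') s = K := by
    rw [← hcount']
    exact Nat.nth_count hKforced'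
  have hterm : g K ≤ psi τ g p := by
    have h1 : g (Nat.nth (Forced τ (extf s p t)) s)
        ≤ Finset.univ.sup (fun t'' : Fin s → Fin (p + 1) =>
            g (Nat.nth (Forced τ (extf s p t'')) s)) :=
      Finset.le_sup (f := fun t'' : Fin s → Fin (p + 1) =>
        g (Nat.nth (Forced τ (extf s p t'')) s)) (Finset.mem_univ t)
    rw [← hw', hnth'] at h1
    calc g K ≤ _ := h1
      _ ≤ psi τ g p := Finset.le_sup (f := fun s => Finset.univ.sup
            (fun t'' : Fin s → Fin (p + 1) => g (Nat.nth (Forced τ (extf s p t'')) s)))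
          (by simp only [Finset.mem_range]; omega)
  have hKtrue : mv τ z K < g K := (hmatch K).mp ((hbit K).mpr hKforced)
  have hmvK : mv τ z K = z s := by
    rw [mv_of_forced τ hKforced, st_snd_eq_count, hKcount]
  have hzslt : z s < g K := hmvK ▸ hKtrue
  have hfin : psi τ g p + p + 1 < z s := by
    have h2 := hslt
    simp only [hf] at h2
    exact h2
  omega

theorem stmt2 :
    (∀ A : Set (ℕ → ℕ), IIWinStratBounding A → frakD ≤ #A) ∧
    sInf { c | ∃ A : Set (ℕ → ℕ), IIWinStratBounding A ∧ #A = c } = frakD := by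
  refine ⟨part1, ?_⟩
  obtain ⟨D, hD, hDcard⟩ := frakD_mem
  set A₀ : Set (ℕ → ℕ) := Set.range (fun x : ↥D × ℕ =>
      fun k => (Finset.range (k + 1)).sup (fun j => (x.1 : ℕ → ℕ) j) + x.2 + 1) with hA₀
  have hwin : IIWinStratBounding A₀ := by
    refine ⟨fun _ => true, fun n => ⟨?_, ?_⟩⟩
    · have huniv : {k | (fun k => (fun _ => true : List ℕ → Bool)
          ((List.range (k + 1)).map n)) k = true} = Set.univ := by
        ext k; simp
      rw [huniv]
      exact Set.infinite_univ
    · obtain ⟨y, hyD, hev⟩ := hD (fun k => (Finset.range (k + 1)).sup n)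
      obtain ⟨N, hN⟩ := eventually_atTop.mp hev
      set m := (Finset.range N).sup n with hm
      refine ⟨_, ⟨(⟨y, hyD⟩, m), rfl⟩, fun k => ?_⟩
      constructor
      · intro _
        show n k < (Finset.range (k + 1)).sup (fun j => y j) + m + 1
        by_cases hk : N ≤ k
        · have h1 : (Finset.range (k + 1)).sup n ≤ y k := hN k hk
          have h2 : y k ≤ (Finset.range (k + 1)).sup (fun j => y j) :=
            Finset.le_sup (f := fun j => y j) (by simp)
          have h3 : n k ≤ (Finset.range (k + 1)).sup n :=
            Finset.le_sup (f := n) (by simp)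
          omega
        · have h3 : n k ≤ m :=
            Finset.le_sup (f := n) (by simp only [Finset.mem_range]; omega)
          omega
      · intro _; rfl
  have hcard : #A₀ = frakD := by
    apply le_antisymm
    · calc #A₀ ≤ #(↥D × ℕ) := Cardinal.mk_range_le
        _ = #↥D * ℵ₀ := by simp
        _ = frakD * ℵ₀ := by rw [hDcard]
        _ = frakD := by
            rw [Cardinal.mul_eq_max aleph0_lt_frakD.le le_rfl]
            exact max_eq_left aleph0_lt_frakD.le
    · exact part1 A₀ hwin
  apply le_antisymm
  · exact csInf_le (OrderBot.bddBelow _) ⟨A₀, hwin, hcard⟩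
  · refine le_csInf ⟨frakD, A₀, hwin, hcard⟩ ?_
    rintro c ⟨A, hA, rfl⟩
    exact part1 A hA
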